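/- For an indeterminate (or any real) Y and nonnegative integer n, ∑_{j=0}^{n} (−1)^j · C(Y−1, j) · C(Y+n−j, n−j) = n + 1, where C(x, k) denotes the generalized binomial coefficient x(x−1)⋯(x−k+1)/k!. -/

import Mathlib

open Finset

/-- Generalized binomial coefficient `C(x, k) = x(x−1)⋯(x−k+1)/k!` for real `x`. -/
noncomputable def genChoose (x : ℝ) (k : ℕ) : ℝ :=
  (∏ i ∈ Finset.range k, (x - i)) / k.factorial

lemma descPochhammer_smeval_real (x : ℝ) (k : ℕ) :
    (descPochhammer ℤ k).smeval x = ∏ i ∈ Finset.range k, (x - i) := by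
  induction k with
  | zero => simp
  | succ k ih =>
    rw [descPochhammer_succ_right, Polynomial.smeval_mul, ih, Finset.prod_range_succ,
      Polynomial.smeval_sub, Polynomial.smeval_X, Polynomial.smeval_natCast]
    simp

lemma genChoose_eq_ringChoose (x : ℝ) (k : ℕ) : genChoose x k = Ring.choose x k := by
  have h := Ring.descPochhammer_eq_factorial_smul_choose x k
  rw [descPochhammer_smeval_real, nsmul_eq_mul] at h
  have hne : (k.factorial : ℝ) ≠ 0 := by exact_mod_cast k.factorial_ne_zero
  rw [genChoose, h, mul_div_cancel_left₀ _ hne]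

lemma genChoose_reflect (x : ℝ) (k : ℕ) :
    genChoose x k = (-1)^k * genChoose ((k : ℝ) - 1 - x) k := by
  have h : ∏ i ∈ Finset.range k, ((k:ℝ) - 1 - x - i)
      = (-1)^k * ∏ i ∈ Finset.range k, (x - i) := by
    rw [← Finset.prod_range_reflect (fun i => (k:ℝ) - 1 - x - i) k]
    have : ∀ j ∈ Finset.range k, (k:ℝ) - 1 - x - ((k - 1 - j : ℕ) : ℝ)
        = (-1) * (x - j) := by
      intro j hj
      have hj' : j < k := Finset.mem_range.mp hj
      have : ((k - 1 - j : ℕ) : ℝ) = (k : ℝ) - 1 - j := by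
        have : k - 1 - j = k - (1 + j) := by omega
        rw [this, Nat.cast_sub (by omega)]
        push_cast; ring
      rw [this]; ring
    rw [Finset.prod_congr rfl this, Finset.prod_mul_distrib, Finset.prod_const,
      Finset.card_range]
  rw [genChoose, genChoose, h, mul_div_assoc, ← mul_assoc, ← mul_pow]
  norm_num

lemma prod_neg_two (n : ℕ) :
    ∏ i ∈ Finset.range n, ((-2:ℝ) - i) = (-1)^n * (n+1).factorial := by
  induction n with
  | zero => simp
  | succ n ih =>
    rw [Finset.prod_range_succ, ih]
    have h2 : ((n+1)+1).factorial = ((n+1)+1) * (n+1).factorial := Nat.factorial_succ _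
    rw [h2]
    push_cast
    ring

theorem stmt10 (n : ℕ) (Y : ℝ) :
    ∑ j ∈ Finset.range (n+1),
      (-1 : ℝ)^j * genChoose (Y - 1) j * genChoose (Y + n - j) (n - j)
    = (n : ℝ) + 1 := by
  have key : ∀ j ∈ Finset.range (n+1),
      (-1:ℝ)^j * genChoose (Y-1) j * genChoose (Y + n - j) (n-j)
      = (-1)^n * (genChoose (Y-1) j * genChoose (-1-Y) (n-j)) := by
    intro j hj
    have hj'' : j ≤ n := Nat.lt_succ_iff.mp (Finset.mem_range.mp hj)
    rw [genChoose_reflect (Y + n - j) (n - j)]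
    have hc : ((n - j : ℕ) : ℝ) = (n : ℝ) - j := by
      rw [Nat.cast_sub hj'']
    rw [hc]
    have harg : (n:ℝ) - j - 1 - (Y + n - j) = -1 - Y := by ring
    rw [harg]
    have hsign : (-1:ℝ)^j * (-1)^(n-j) = (-1)^n := by
      rw [← pow_add]; congr 1; omega
    linear_combination (genChoose (Y-1) j * genChoose (-1-Y) (n-j)) * hsign
  rw [Finset.sum_congr rfl key, ← Finset.mul_sum]
  simp only [genChoose_eq_ringChoose]
  have hv : ∑ j ∈ Finset.range (n+1), Ring.choose (Y-1) j * Ring.choose (-1-Y) (n-j)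
      = Ring.choose (-2 : ℝ) n := by
    have := Ring.add_choose_eq (r := Y - 1) (s := -1 - Y) n (Commute.all _ _)
    rw [Finset.Nat.sum_antidiagonal_eq_sum_range_succ_mk] at this
    rw [← this]
    norm_num
  rw [hv, ← genChoose_eq_ringChoose, genChoose, prod_neg_two, Nat.factorial_succ]
  have hne : (n.factorial : ℝ) ≠ 0 := by exact_mod_cast n.factorial_ne_zero
  field_simp
  rw [← pow_mul, mul_comm n 2, pow_mul, neg_one_sq, one_pow, one_mul]; push_cast
  ring
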